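/- Let E be a measurable space, 𝒞 = {1,...,C} a finite label set, and (X_0, C_0), (X_1, C_1), ..., (X_n, C_n) i.i.d. random pairs in E × 𝒞. Let T be a nonempty finite set of checkpoints and, for each checkpoint t ∈ T and each model k ∈ {1,...,K}, let s_t^k : E × 𝒞 → ℝ be a measurable score function. Define per-model conformal p-values p_{t,c}^k(X_0) = (1 + #{i ∈ {1,...,n} : s_t^k(X_0, c) ≤ s_t^k(X_i, C_i)}) / (n + 1), merged p-values p_{t,c}(X_0) = K · min_{k=1,...,K} p_{t,c}^k(X_0), and prediction sets Γ_t(X_0) = {c ∈ 𝒞 : p_{t,c}(X_0) > α} with α = (1 − p_targ)/|T| for a given p_targ ∈ (0,1). Then for every measurable stopping rule τ mapping the outcome to an element of T, Pr(C_0 ∈ Γ_τ(X_0)) ≥ p_targ. -/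

import Mathlib

open MeasureTheory ProbabilityTheory
open scoped Classical ENNReal

section Aux
variable {Ω : Type*} [MeasurableSpace Ω] {E' : Type*} [MeasurableSpace E']

lemma map_fun_eq_pi (μ : Measure Ω) [IsProbabilityMeasure μ] {n : ℕ}
    (Z : Fin (n + 1) → Ω → E') (hmeas : ∀ i, Measurable (Z i))
    (hindep : iIndepFun Z μ) :
    μ.map (fun ω i => Z i ω) = Measure.pi (fun i => μ.map (Z i)) := by
  haveI : ∀ i, IsProbabilityMeasure (μ.map (Z i)) :=
    fun i => Measure.isProbabilityMeasure_map (hmeas i).aemeasurable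
  refine (Measure.pi_eq fun t ht => ?_).symm
  rw [Measure.map_apply (measurable_pi_lambda _ fun i => hmeas i) (MeasurableSet.univ_pi ht)]
  have hpre : (fun ω i => Z i ω) ⁻¹' Set.univ.pi t = ⋂ i ∈ Finset.univ, Z i ⁻¹' t i := by
    ext ω; simp [Set.mem_pi]
  rw [hpre, hindep.measure_inter_preimage_eq_mul Finset.univ (fun i _ => ht i)]
  exact Finset.prod_congr rfl fun i _ => (Measure.map_apply (hmeas i) (ht i)).symm

lemma conformal_core (μ : Measure Ω) [IsProbabilityMeasure μ] {n : ℕ}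
    (Z : Fin (n + 1) → Ω → E') (hmeas : ∀ i, Measurable (Z i))
    (hindep : iIndepFun Z μ)
    (hident : ∀ i, IdentDistrib (Z i) (Z 0) μ μ)
    (f : E' → ℝ) (hf : Measurable f) (β : ℝ) (hβ : 0 ≤ β) :
    μ {ω | (1 + ((Finset.univ.filter
        fun i : Fin (n + 1) => i ≠ 0 ∧ f (Z 0 ω) ≤ f (Z i ω)).card : ℝ)) / ((n : ℝ) + 1) ≤ β}
      ≤ ENNReal.ofReal β := by
  classical
  set ν : Measure E' := μ.map (Z 0) with hν
  haveI : IsProbabilityMeasure ν := Measure.isProbabilityMeasure_map (hmeas 0).aemeasurable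
  set π : Measure (Fin (n + 1) → E') := Measure.pi (fun _ => ν) with hπdef
  have hmap : μ.map (fun ω i => Z i ω) = π := by
    rw [map_fun_eq_pi μ Z hmeas hindep]
    exact congrArg Measure.pi (funext fun i => (hident i).map_eq)
  set m : ℕ := Nat.floor (β * ((n : ℝ) + 1)) with hm
  -- counts and events on the product space
  set N : Fin (n + 1) → (Fin (n + 1) → E') → ℕ := fun j z =>
    (Finset.univ.filter fun i : Fin (n + 1) => i ≠ j ∧ f (z j) ≤ f (z i)).card with hN
  set A : Fin (n + 1) → Set (Fin (n + 1) → E') := fun j => {z | N j z < m} with hA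
  have hNmeas : ∀ j, Measurable (N j) := by
    intro j
    have : N j = fun z => ∑ i : Fin (n + 1),
        if i ≠ j ∧ f (z j) ≤ f (z i) then 1 else 0 :=
      funext fun z => Finset.card_filter _ _
    rw [this]
    refine Finset.measurable_sum _ fun i _ => ?_
    by_cases hij : i = j
    · simp [hij]
    · have : (fun z : Fin (n + 1) → E' => if i ≠ j ∧ f (z j) ≤ f (z i) then (1:ℕ) else 0)
          = fun z => if f (z j) ≤ f (z i) then 1 else 0 := by
        funext z; simp [hij]
      rw [this]
      exact Measurable.ite
        (measurableSet_le (hf.comp (measurable_pi_apply j)) (hf.comp (measurable_pi_apply i)))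
        measurable_const measurable_const
  have hAmeas : ∀ j, MeasurableSet (A j) := fun j =>
    (hNmeas j) measurableSet_Iio
  -- deterministic bound: at most m indices have small rank
  have hdet : ∀ z, (Finset.univ.filter fun j => z ∈ A j).card ≤ m := by
    intro z
    set S := Finset.univ.filter fun j => z ∈ A j with hS
    rcases S.eq_empty_or_nonempty with h | h
    · simp [h]
    · obtain ⟨j, hjS, hjmin⟩ := S.exists_min_image (fun j => f (z j)) h
      have hjA : N j z < m := by
        have := Finset.mem_filter.mp hjS
        exact this.2
      have hsub : S.erase j ⊆
          Finset.univ.filter fun i : Fin (n + 1) => i ≠ j ∧ f (z j) ≤ f (z i) := by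
        intro i hi
        have hij := Finset.ne_of_mem_erase hi
        have hiS := Finset.mem_of_mem_erase hi
        exact Finset.mem_filter.mpr ⟨Finset.mem_univ i, hij, hjmin i hiS⟩
      have : S.card - 1 ≤ N j z := by
        have := Finset.card_le_card hsub
        rwa [Finset.card_erase_of_mem hjS] at this
      omega
  -- exchangeability: π (A j) = π (A 0)
  have hswap : ∀ j, π (A j) = π (A 0) := by
    intro j
    let σ : Equiv.Perm (Fin (n + 1)) := Equiv.swap 0 j
    have hmp : MeasurePreserving (MeasurableEquiv.piCongrLeft (fun _ => E') σ) π π :=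
      measurePreserving_piCongrLeft (fun _ => ν) σ
    have hpre : (MeasurableEquiv.piCongrLeft (fun _ => E') σ) ⁻¹' (A 0) = A j := by
      ext z
      have happ : ∀ i, (MeasurableEquiv.piCongrLeft (fun _ => E') σ) z i = z (σ i) := by
        intro i
        conv_lhs => rw [show i = σ (σ.symm i) from (Equiv.apply_symm_apply σ i).symm]
        rw [MeasurableEquiv.piCongrLeft_apply_apply]
        rfl
      simp only [Set.mem_preimage, hA, Set.mem_setOf_eq, hN]
      have hcard : (Finset.univ.filter fun i : Fin (n + 1) =>
            i ≠ 0 ∧ f ((MeasurableEquiv.piCongrLeft (fun _ => E') σ) z 0)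
              ≤ f ((MeasurableEquiv.piCongrLeft (fun _ => E') σ) z i)).card
          = (Finset.univ.filter fun i : Fin (n + 1) => i ≠ j ∧ f (z j) ≤ f (z i)).card := by
        simp only [happ]
        have hσ0 : σ 0 = j := Equiv.swap_apply_left 0 j
        refine Finset.card_bij (fun i _ => σ i) ?_ ?_ ?_
        · intro a ha
          obtain ⟨-, ha0, hle⟩ := Finset.mem_filter.mp ha
          refine Finset.mem_filter.mpr ⟨Finset.mem_univ _, ?_, ?_⟩
          · rw [← hσ0]; exact fun h => ha0 (σ.injective h)
          · rwa [hσ0] at hle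
        · intro a _ b _ hab; exact σ.injective hab
        · intro b hb
          obtain ⟨-, hbj, hle⟩ := Finset.mem_filter.mp hb
          refine ⟨σ b, Finset.mem_filter.mpr ⟨Finset.mem_univ _, ?_, ?_⟩, ?_⟩
          · intro h
            apply hbj
            have : σ (σ b) = σ 0 := congrArg σ h
            rw [Equiv.swap_apply_self] at this
            rw [this, hσ0]
          · rw [hσ0, Equiv.swap_apply_self]; exact hle
          · exact Equiv.swap_apply_self 0 j b
      rw [hcard]
    calc π (A j) = π ((MeasurableEquiv.piCongrLeft (fun _ => E') σ) ⁻¹' (A 0)) := by rw [hpre]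
    _ = π (A 0) := hmp.measure_preimage (hAmeas 0).nullMeasurableSet
  -- sum bound
  have hsum : ((n : ℝ≥0∞) + 1) * π (A 0) ≤ (m : ℝ≥0∞) := by
    have h1 : ∑ j : Fin (n + 1), π (A j) = ((n : ℝ≥0∞) + 1) * π (A 0) := by
      simp only [hswap]
      simp [Finset.card_univ, mul_comm]
    have h2 : ∫⁻ z, ∑ j : Fin (n + 1), (A j).indicator (fun _ => (1:ℝ≥0∞)) z ∂π
        = ∑ j : Fin (n + 1), π (A j) := by
      rw [lintegral_finset_sum _ fun j _ => (measurable_const.indicator (hAmeas j))]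
      exact Finset.sum_congr rfl fun j _ => lintegral_indicator_one (hAmeas j)
    have h3 : ∀ z, ∑ j : Fin (n + 1), (A j).indicator (fun _ => (1:ℝ≥0∞)) z ≤ (m : ℝ≥0∞) := by
      intro z
      have : ∑ j : Fin (n + 1), (A j).indicator (fun _ => (1:ℝ≥0∞)) z
          = ((Finset.univ.filter fun j => z ∈ A j).card : ℝ≥0∞) := by
        rw [Finset.card_filter]
        push_cast
        refine Finset.sum_congr rfl fun j _ => ?_
        by_cases hz : z ∈ A j <;> simp [hz, Set.indicator_apply]
      rw [this]
      exact_mod_cast Nat.cast_le.mpr (hdet z)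
    rw [← h1, ← h2]
    calc ∫⁻ z, ∑ j : Fin (n + 1), (A j).indicator (fun _ => (1:ℝ≥0∞)) z ∂π
        ≤ ∫⁻ _, (m : ℝ≥0∞) ∂π := lintegral_mono h3
      _ = (m : ℝ≥0∞) := by simp
  -- identify the event
  have hevent : {ω | (1 + ((Finset.univ.filter
        fun i : Fin (n + 1) => i ≠ 0 ∧ f (Z 0 ω) ≤ f (Z i ω)).card : ℝ)) / ((n : ℝ) + 1) ≤ β}
      = (fun ω i => Z i ω) ⁻¹' (A 0) := by
    ext ω
    simp only [Set.mem_setOf_eq, Set.mem_preimage, hA, Set.mem_setOf_eq, hN]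
    have hn1 : (0:ℝ) < (n : ℝ) + 1 := by positivity
    rw [div_le_iff₀ hn1]
    constructor
    · intro h
      have h' : (((Finset.univ.filter fun i : Fin (n + 1) =>
          i ≠ 0 ∧ f (Z 0 ω) ≤ f (Z i ω)).card + 1 : ℕ) : ℝ) ≤ β * ((n:ℝ)+1) := by
        push_cast; linarith
      have := Nat.le_floor h'
      omega
    · intro h
      have h1 : ((Finset.univ.filter fun i : Fin (n + 1) =>
          i ≠ 0 ∧ f (Z 0 ω) ≤ f (Z i ω)).card + 1 : ℕ) ≤ m := h
      have h2 : (m : ℝ) ≤ β * ((n:ℝ)+1) :=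
        Nat.floor_le (show (0:ℝ) ≤ β * ((n:ℝ)+1) by positivity)
      have h3 : (((Finset.univ.filter fun i : Fin (n + 1) =>
          i ≠ 0 ∧ f (Z 0 ω) ≤ f (Z i ω)).card + 1 : ℕ) : ℝ) ≤ (m : ℝ) := by
        exact_mod_cast h1
      push_cast at h3
      linarith
  rw [hevent, ← Measure.map_apply (measurable_pi_lambda _ fun i => hmeas i) (hAmeas 0), hmap]
  -- conclude
  have hne0 : ((n : ℝ≥0∞) + 1) ≠ 0 := by simp
  have hnetop : ((n : ℝ≥0∞) + 1) ≠ ⊤ := by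
    simp [ENNReal.add_eq_top]
  have hπA : π (A 0) ≤ (m : ℝ≥0∞) / ((n : ℝ≥0∞) + 1) := by
    rw [ENNReal.le_div_iff_mul_le (Or.inl hne0) (Or.inl hnetop), mul_comm]
    exact hsum
  refine hπA.trans ?_
  have hconv : (m : ℝ≥0∞) / ((n : ℝ≥0∞) + 1) = ENNReal.ofReal ((m : ℝ) / ((n:ℝ)+1)) := by
    rw [ENNReal.ofReal_div_of_pos (by positivity), ENNReal.ofReal_natCast]
    congr 1
    rw [ENNReal.ofReal_add (Nat.cast_nonneg n) zero_le_one, ENNReal.ofReal_natCast,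
      ENNReal.ofReal_one]
  rw [hconv]
  refine ENNReal.ofReal_le_ofReal ?_
  rw [div_le_iff₀ (by positivity)]
  exact Nat.floor_le (by positivity)

end Aux


/-- Let `Z i = (X i, C i)`, `i = 0, ..., n`, be i.i.d. random pairs in
`E × 𝒞` with `𝒞 = Fin C`. Let `T` be a nonempty finite set of checkpoints and, for each
checkpoint `t` and model `k ∈ {1,...,K}`, let `s t k : E × 𝒞 → ℝ` be a measurable score
function. Define per-model conformal p-values
`p_{t,c}^k(X 0) = (1 + #{i ∈ {1,...,n} : s t k (X 0, c) ≤ s t k (X i, C i)})/(n+1)`,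
merged p-values `p_{t,c}(X 0) = K ⬝ min_k p_{t,c}^k(X 0)`, and prediction sets
`Γ_t(X 0) = {c : p_{t,c}(X 0) > α}` with `α = (1 − p_targ)/|T|`, `p_targ ∈ (0,1)`.
Then for every measurable stopping rule `τ` mapping the outcome to an element of `T`,
`Pr(C 0 ∈ Γ_τ(X 0)) ≥ p_targ`. -/
theorem ensemble_spikecp_pm_reliability
    {Ω E T : Type*} [MeasurableSpace Ω] [MeasurableSpace E]
    (μ : Measure Ω) [IsProbabilityMeasure μ]
    [Fintype T] [Nonempty T] [MeasurableSpace T] [MeasurableSingletonClass T]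
    (n C : ℕ) (hC : 0 < C)
    (Z : Fin (n + 1) → Ω → E × Fin C)
    (hmeas : ∀ i, Measurable (Z i))
    (hindep : iIndepFun Z μ)
    (hident : ∀ i, IdentDistrib (Z i) (Z 0) μ μ)
    (K : ℕ) (hK : 0 < K)
    (s : T → Fin K → E × Fin C → ℝ) (hs : ∀ t k, Measurable (s t k))
    (ptarg : ℝ) (hptarg : ptarg ∈ Set.Ioo (0 : ℝ) 1)
    (τ : Ω → T) (hτ : Measurable τ) :
    ENNReal.ofReal ptarg ≤
      μ {ω | (Z 0 ω).2 ∈ {c : Fin C |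
        (1 - ptarg) / (Fintype.card T : ℝ) <
          (K : ℝ) * ⨅ k : Fin K,
            (1 + ((Finset.univ.filter
                fun i : Fin (n + 1) =>
                  i ≠ 0 ∧ s (τ ω) k ((Z 0 ω).1, c) ≤ s (τ ω) k (Z i ω)).card : ℝ))
              / ((n : ℝ) + 1)}} := by
  classical
  set α : ℝ := (1 - ptarg) / (Fintype.card T : ℝ) with hα
  obtain ⟨hp0, hp1⟩ := hptarg
  have hT1 : (1 : ℝ) ≤ (Fintype.card T : ℝ) := by
    exact_mod_cast Nat.one_le_iff_ne_zero.mpr Fintype.card_ne_zero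
  have hTpos : (0 : ℝ) < (Fintype.card T : ℝ) := lt_of_lt_of_le one_pos hT1
  have hαpos : 0 < α := div_pos (by linarith) hTpos
  have hKpos : (0 : ℝ) < (K : ℝ) := by exact_mod_cast hK
  haveI : Nonempty (Fin K) := ⟨⟨0, hK⟩⟩
  -- the bad events for each checkpoint and model
  set Bad : T → Fin K → Set Ω := fun t k =>
    {ω | (1 + ((Finset.univ.filter
        fun i : Fin (n + 1) => i ≠ 0 ∧ s t k (Z 0 ω) ≤ s t k (Z i ω)).card : ℝ))
      / ((n : ℝ) + 1) ≤ α / K} with hBad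
  have hBadLe : ∀ t k, μ (Bad t k) ≤ ENNReal.ofReal (α / K) := fun t k =>
    conformal_core μ Z hmeas hindep hident (s t k) (hs t k) (α / K)
      (le_of_lt (div_pos hαpos hKpos))
  set G : Set Ω := {ω | (Z 0 ω).2 ∈ {c : Fin C |
        (1 - ptarg) / (Fintype.card T : ℝ) <
          (K : ℝ) * ⨅ k : Fin K,
            (1 + ((Finset.univ.filter
                fun i : Fin (n + 1) =>
                  i ≠ 0 ∧ s (τ ω) k ((Z 0 ω).1, c) ≤ s (τ ω) k (Z i ω)).card : ℝ))
              / ((n : ℝ) + 1)}} with hG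
  have hsubset : Gᶜ ⊆ ⋃ t : T, ⋃ k : Fin K, Bad t k := by
    intro ω hω
    simp only [hG, Set.mem_compl_iff, Set.mem_setOf_eq, not_lt] at hω
    set p : Fin K → ℝ := fun k =>
      (1 + ((Finset.univ.filter
          fun i : Fin (n + 1) =>
            i ≠ 0 ∧ s (τ ω) k ((Z 0 ω).1, (Z 0 ω).2) ≤ s (τ ω) k (Z i ω)).card : ℝ))
        / ((n : ℝ) + 1) with hp
    obtain ⟨k0, hk0⟩ := Finite.exists_min p
    have hinf : ⨅ k : Fin K, p k = p k0 :=
      le_antisymm (ciInf_le (Finite.bddBelow_range p) k0) (le_ciInf hk0)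
    have hle : (K : ℝ) * p k0 ≤ α := by rw [← hinf]; exact hω
    have hk0le : p k0 ≤ α / K := by
      rw [le_div_iff₀ hKpos, mul_comm]; exact hle
    refine Set.mem_iUnion.mpr ⟨τ ω, Set.mem_iUnion.mpr ⟨k0, ?_⟩⟩
    simp only [hBad, Set.mem_setOf_eq]
    have hz : ((Z 0 ω).1, (Z 0 ω).2) = Z 0 ω := rfl
    rw [← hz]
    exact hk0le
  have hGc : μ Gᶜ ≤ ENNReal.ofReal (1 - ptarg) := by
    refine le_trans (measure_mono hsubset) ?_
    refine le_trans (measure_iUnion_fintype_le _ _) ?_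
    have hsum1 : ∀ t : T, μ (⋃ k : Fin K, Bad t k) ≤ (K : ℝ≥0∞) * ENNReal.ofReal (α / K) := by
      intro t
      refine le_trans (measure_iUnion_fintype_le _ _) ?_
      calc ∑ k : Fin K, μ (Bad t k) ≤ ∑ _k : Fin K, ENNReal.ofReal (α / K) :=
            Finset.sum_le_sum fun k _ => hBadLe t k
        _ = (K : ℝ≥0∞) * ENNReal.ofReal (α / K) := by
            simp [Finset.card_univ, mul_comm]
    calc ∑ t : T, μ (⋃ k : Fin K, Bad t k)
        ≤ ∑ _t : T, (K : ℝ≥0∞) * ENNReal.ofReal (α / K) :=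
          Finset.sum_le_sum fun t _ => hsum1 t
      _ = (Fintype.card T : ℝ≥0∞) * ((K : ℝ≥0∞) * ENNReal.ofReal (α / K)) := by
          simp [Finset.card_univ, mul_comm]
      _ = ENNReal.ofReal (1 - ptarg) := by
          rw [show ((K : ℝ≥0∞)) = ENNReal.ofReal (K : ℝ) by rw [ENNReal.ofReal_natCast],
            show ((Fintype.card T : ℝ≥0∞)) = ENNReal.ofReal (Fintype.card T : ℝ) by
              rw [ENNReal.ofReal_natCast],
            ← ENNReal.ofReal_mul (le_of_lt hKpos),
            ← ENNReal.ofReal_mul (le_of_lt hTpos)]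
          congr 1
          rw [hα]
          field_simp
  have hone : (1 : ℝ≥0∞) ≤ μ G + ENNReal.ofReal (1 - ptarg) := by
    have := measure_union_le (μ := μ) G Gᶜ
    rw [Set.union_compl_self, measure_univ] at this
    exact this.trans (add_le_add le_rfl hGc)
  have hofadd : ENNReal.ofReal ptarg + ENNReal.ofReal (1 - ptarg) = 1 := by
    rw [← ENNReal.ofReal_add (le_of_lt hp0) (by linarith)]
    norm_num
  have h1 : ENNReal.ofReal ptarg = 1 - ENNReal.ofReal (1 - ptarg) :=
    ENNReal.eq_sub_of_add_eq ENNReal.ofReal_ne_top hofadd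
  rw [h1]
  exact tsub_le_iff_right.mpr hone
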